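/- Let R be a central reduced ring and I a nil ideal of R. Then R/I is central reduced. -/

import Mathlib

/-- A ring is central reduced if every nilpotent element is central. -/
def IsCentralReduced (R : Type*) [Ring R] : Prop :=
  ∀ a : R, IsNilpotent a → a ∈ Set.center R

theorem stmt_2 (R : Type*) [Ring R] (hcr : IsCentralReduced R)
    (I : TwoSidedIdeal R) (hnil : ∀ a ∈ I, IsNilpotent a) :
    IsCentralReduced I.ringCon.Quotient := by
  intro x hx
  induction x using Quotient.inductionOn with
  | h a =>
    obtain ⟨n, hn⟩ := hx
    -- a^n ∈ I
    have hmem : a ^ n ∈ I := by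
      rw [TwoSidedIdeal.mem_iff]
      have hn' : ((a ^ n : R) : I.ringCon.Quotient) = 0 := hn
      exact I.ringCon.eq.mp hn'
    have hanil : IsNilpotent a := by
      obtain ⟨m, hm⟩ := hnil _ hmem
      exact ⟨n * m, by rw [pow_mul, hm]⟩
    have hc : a ∈ Set.center R := hcr a hanil
    rw [Semigroup.mem_center_iff] at hc
    refine Semigroup.mem_center_iff.mpr ?_
    intro y
    induction y using Quotient.inductionOn with
    | h b =>
      show Quotient.mk _ (b * a) = Quotient.mk _ (a * b)
      rw [hc b]
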